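/- On (R^+)^{n−1} × R^n (n ≥ 2) with the bivectors Λ̄0 = Σ_{i=1}^{n−1} a_i ∂/∂a_i ∧ (∂/∂b_i − ∂/∂b_{i+1}) and Λ̄1 = Σ_{i=1}^{n−1} a_i ∂/∂a_i ∧ (b_i ∂/∂b_i − b_{i+1} ∂/∂b_{i+1}) + Σ_{i=1}^{n−1} a_i ∂/∂b_{i+1} ∧ ∂/∂b_i + Σ_{i=1}^{n−2} a_i a_{i+1} ∂/∂a_{i+1} ∧ ∂/∂a_i, there exists no (1,1)-tensor field N̄ on (R^+)^{n−1} × R^n such that Λ̄1♯ = N̄ ∘ Λ̄0♯. -/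

import Mathlib

open Finset

/-- The sharp map of `Λ̄0 = Σ a_i ∂a_i ∧ (∂b_i − ∂b_{i+1})` on
`(ℝ⁺)^{n−1} × ℝⁿ`, applied to a covector `α = (α_a, α_b)`. -/
noncomputable def sharp0 (n : ℕ) (a : ℕ → ℝ) (α : (ℕ → ℝ) × (ℕ → ℝ)) :
    (ℕ → ℝ) × (ℕ → ℝ) :=
  (fun j => if j ∈ Icc 1 (n - 1) then
      ∑ i ∈ Icc 1 n, ((if i = j then a j else 0) - (if i = j + 1 then a j else 0)) * α.2 i
    else 0,
   fun j => if j ∈ Icc 1 n then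
      ∑ i ∈ Icc 1 (n - 1),
        (-((if j = i then a i else 0) - (if j = i + 1 then a i else 0))) * α.1 i
    else 0)

/-- The sharp map of
`Λ̄1 = Σ a_i ∂a_i ∧ (b_i ∂b_i − b_{i+1} ∂b_{i+1}) + Σ a_i ∂b_{i+1} ∧ ∂b_i
      + Σ a_i a_{i+1} ∂a_{i+1} ∧ ∂a_i`,
applied to a covector `α = (α_a, α_b)`. -/
noncomputable def sharp1 (n : ℕ) (a b : ℕ → ℝ) (α : (ℕ → ℝ) × (ℕ → ℝ)) :
    (ℕ → ℝ) × (ℕ → ℝ) :=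
  (fun j => if j ∈ Icc 1 (n - 1) then
      (∑ i ∈ Icc 1 (n - 1),
        ((if j = i + 1 then a i * a j else 0) - (if i = j + 1 then a j * a i else 0)) * α.1 i)
      + ∑ i ∈ Icc 1 n,
        ((if i = j then a j * b j else 0) - (if i = j + 1 then a j * b (j + 1) else 0)) * α.2 i
    else 0,
   fun j => if j ∈ Icc 1 n then
      (∑ i ∈ Icc 1 (n - 1),
        (-((if j = i then a i * b i else 0) - (if j = i + 1 then a i * b (i + 1) else 0))) * α.1 i)
      + ∑ i ∈ Icc 1 n,
        ((if j = i + 1 then a i else 0) - (if i = j + 1 then a j else 0)) * α.2 i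
    else 0)

/-- There is no (1,1)-tensor field `N̄` on `(ℝ⁺)^{n−1} × ℝⁿ` relating the
reduced Toda Poisson bivectors by `Λ̄1♯ = N̄ ∘ Λ̄0♯`. -/
theorem no_recursion_operator (n : ℕ) (hn : 2 ≤ n) :
    ¬ ∃ Nbar : ((ℕ → ℝ) × (ℕ → ℝ)) → ((ℕ → ℝ) × (ℕ → ℝ)) →ₗ[ℝ] ((ℕ → ℝ) × (ℕ → ℝ)),
      ∀ a b : ℕ → ℝ, (∀ i ∈ Icc 1 (n - 1), 0 < a i) →
        ∀ α : (ℕ → ℝ) × (ℕ → ℝ), sharp1 n a b α = Nbar (a, b) (sharp0 n a α) := by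

  rintro ⟨N, hN⟩
  have h := hN (fun _ => 1) (fun i => (i : ℝ)) (fun i _ => one_pos)
    ((fun _ => 0), fun _ => 1)
  have h1 : (1 : ℕ) ∈ Icc 1 (n - 1) := by
    simp only [mem_Icc]
    omega
  have h0 : sharp0 n (fun _ => 1) ((fun _ => 0), fun _ => 1) = 0 := by
    unfold sharp0
    refine Prod.ext (funext fun j => ?_) (funext fun j => ?_) <;> simp only
    · split
      · rename_i hj
        simp only [mem_Icc] at hj
        have hjn : j ∈ Icc 1 n := by simp only [mem_Icc]; omega
        have hjn' : j + 1 ∈ Icc 1 n := by simp only [mem_Icc]; omega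
        simp only [mul_one, Finset.sum_sub_distrib, Finset.sum_ite_eq', hjn, hjn',
          if_true, sub_self, Prod.fst_zero]
        rfl
      · rfl
    · simp
  rw [h0, map_zero] at h
  have h2 := congrArg (fun p => p.1 1) h
  unfold sharp1 at h2
  simp only [h1, if_true, Prod.fst_zero] at h2
  have e1 : (1:ℕ) ∈ Icc 1 n := by simp only [mem_Icc]; omega
  have e2 : (2:ℕ) ∈ Icc 1 n := by simp only [mem_Icc]; omega
  have hsum1 : (∑ i ∈ Icc 1 (n - 1),
      ((if (1:ℕ) = i + 1 then (1:ℝ) * 1 else 0) - (if i = 1 + 1 then (1:ℝ) * 1 else 0)) *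
        (0 : ℝ)) = 0 := by
    simp
  have hsum2 : (∑ i ∈ Icc 1 n,
      ((if i = 1 then (1:ℝ) * ((1:ℕ):ℝ) else 0) -
        (if i = 1 + 1 then (1:ℝ) * (((1:ℕ) + 1 : ℕ):ℝ) else 0)) * 1) = -1 := by
    simp only [mul_one, Finset.sum_sub_distrib, Finset.sum_ite_eq', e1, e2, if_true]
    norm_num
  rw [hsum1, hsum2] at h2
  simp at h2
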